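/- Let Ω ⊂ ℝ^N be a bounded open set with Lipschitz continuous boundary, let κ satisfy Assumption (A), let ξ > 0, and let Z_ad be a nonempty, closed and convex subset of L²(ℝ^N∖Ω, μ). Let J : L²(Ω) → ℝ be continuously Fréchet differentiable with, for each u, a gradient ∇J(u) ∈ L²(Ω) representing the derivative via J'(u)v = (∇J(u), v)_{L²(Ω)}. If z̄ minimizes 𝒥(z) := J(S_R z) + (ξ/2)‖z‖²_{L²(ℝ^N∖Ω,μ)} over Z_ad, then with ū := S_R z̄ and p̄ ∈ W^{s,2}_{Ω,κ} the unique weak solution of the adjoint problem (−Δ)^s p̄ = ∇J(ū) in Ω, 𝒩_s p̄ + κ p̄ = 0 in ℝ^N∖Ω, the variational inequality ∫_{ℝ^N∖Ω} (p̄ + ξ z̄)(z − z̄) κ dx ≥ 0 holds for every z ∈ Z_ad. This variational inequality holds if and only if z̄ is the unique element of Z_ad minimizing z ↦ ‖z + p̄/ξ‖_{L²(ℝ^N∖Ω,μ)} over Z_ad. Moreover, if J is convex, then any z̄ ∈ Z_ad satisfying the variational inequality is a global minimizer of 𝒥 over Z_ad. -/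

import Mathlib

open MeasureTheory Set Filter Topology
open scoped ENNReal

noncomputable section

/-- Euclidean space `ℝ^N`. -/
abbrev RN (N : ℕ) := EuclideanSpace ℝ (Fin N)

/-- The normalizing constant `C_{N,s}`. -/
def Cns (N : ℕ) (s : ℝ) : ℝ :=
  s * 2 ^ (2 * s) * Real.Gamma ((2 * s + N) / 2) /
    (Real.pi ^ ((N : ℝ) / 2) * Real.Gamma (1 - s))

/-- The kernel denominator `|x-y|^{N+2s}`. -/
def Kden (N : ℕ) (s : ℝ) (x y : RN N) : ℝ := ‖x - y‖ ^ ((N : ℝ) + 2 * s)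

/-- Extended-real squared Gagliardo seminorm of `u` over a set `A ⊆ ℝ^N × ℝ^N`. -/
def gagE (N : ℕ) (s : ℝ) (A : Set (RN N × RN N)) (u : RN N → ℝ) : ℝ≥0∞ :=
  ∫⁻ p in A, ENNReal.ofReal ((u p.1 - u p.2) ^ 2 / Kden N s p.1 p.2)

/-- Bilinear Gagliardo form of `u, v` over `A ⊆ ℝ^N × ℝ^N` (Bochner integral). -/
def gagB (N : ℕ) (s : ℝ) (A : Set (RN N × RN N)) (u v : RN N → ℝ) : ℝ :=
  ∫ p in A, (u p.1 - u p.2) * (v p.1 - v p.2) / Kden N s p.1 p.2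

/-- The set `Q := ℝ^{2N} ∖ (ℝ^N∖Ω)²`. -/
def QSet {N : ℕ} (Ω : Set (RN N)) : Set (RN N × RN N) := (Ωᶜ ×ˢ Ωᶜ)ᶜ

/-- Membership in `W^{s,2}(ℝ^N)`. -/
def MemWs (N : ℕ) (s : ℝ) (u : RN N → ℝ) : Prop :=
  MemLp u 2 volume ∧ gagE N s univ u < ⊤

/-- Squared `W^{s,2}(ℝ^N)`-norm. -/
def WsNormSq (N : ℕ) (s : ℝ) (u : RN N → ℝ) : ℝ :=
  (∫ x, (u x) ^ 2) + (gagE N s univ u).toReal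

/-- Membership in `W^{s,2}_0(Ω̄)`. -/
def MemWs0 (N : ℕ) (s : ℝ) (Ω : Set (RN N)) (u : RN N → ℝ) : Prop :=
  MemWs N s u ∧ ∀ᵐ x ∂(volume.restrict Ωᶜ), u x = 0

/-- Squared `W^{s,2}_0(Ω̄)`-norm (the full Gagliardo seminorm). -/
def Ws0NormSq (N : ℕ) (s : ℝ) (u : RN N → ℝ) : ℝ := (gagE N s univ u).toReal

/-- Membership in `W^{s,2}(ℝ^N ∖ Ω)`. -/
def MemWsExt (N : ℕ) (s : ℝ) (Ω : Set (RN N)) (z : RN N → ℝ) : Prop :=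
  MemLp z 2 (volume.restrict Ωᶜ) ∧ gagE N s (Ωᶜ ×ˢ Ωᶜ) z < ⊤

/-- Squared `W^{s,2}(ℝ^N ∖ Ω)`-norm. -/
def WsExtNormSq (N : ℕ) (s : ℝ) (Ω : Set (RN N)) (z : RN N → ℝ) : ℝ :=
  (∫ x in Ωᶜ, (z x) ^ 2) + (gagE N s (Ωᶜ ×ˢ Ωᶜ) z).toReal

/-- The interaction operator (nonlocal normal derivative) `𝒩_s`. -/
def Iop (N : ℕ) (s : ℝ) (Ω : Set (RN N)) (u : RN N → ℝ) (x : RN N) : ℝ :=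
  Cns N s * ∫ y in Ω, (u x - u y) / Kden N s x y

/-- `F` represents an element of the dual space `W^{-s,2}(Ω̄)` of `W^{s,2}_0(Ω̄)`. -/
structure MemDualWs0 (N : ℕ) (s : ℝ) (Ω : Set (RN N)) (F : (RN N → ℝ) → ℝ) : Prop where
  congr : ∀ u v, MemWs0 N s Ω u → MemWs0 N s Ω v → u =ᵐ[volume] v → F u = F v
  map_add : ∀ u v, MemWs0 N s Ω u → MemWs0 N s Ω v → F (u + v) = F u + F v
  map_smul : ∀ (c : ℝ) u, MemWs0 N s Ω u → F (c • u) = c * F u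
  bdd : ∃ M : ℝ, ∀ u, MemWs0 N s Ω u → |F u| ≤ M * Real.sqrt (Ws0NormSq N s u)

/-- Dual norm on `W^{-s,2}(Ω̄)`. -/
def dualNormWs0 (N : ℕ) (s : ℝ) (Ω : Set (RN N)) (F : (RN N → ℝ) → ℝ) : ℝ :=
  sInf {M : ℝ | 0 ≤ M ∧ ∀ u, MemWs0 N s Ω u → |F u| ≤ M * Real.sqrt (Ws0NormSq N s u)}

/-- `Ω` has a Lipschitz continuous boundary: near every boundary point, after a rotation
(linear isometry), `Ω` is the region above the graph of a Lipschitz function. -/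
def HasLipschitzBoundary {N : ℕ} (Ω : Set (RN N)) : Prop :=
  ∀ x ∈ frontier Ω, ∃ r : ℝ, 0 < r ∧
    ∃ (e : RN N ≃ₗᵢ[ℝ] RN N) (j : Fin N)
      (φ : ({ i : Fin N // i ≠ j } → ℝ) → ℝ) (L : NNReal),
      LipschitzWith L φ ∧
        ∀ y ∈ Metric.ball x r, (y ∈ Ω ↔ φ (fun i => e y i.1) < e y j)

/-- Weak solution of the Dirichlet exterior value problem
`(−Δ)^s u = F in Ω`, `u = z in ℝ^N∖Ω`. -/
def IsWeakSolDirichlet (N : ℕ) (s : ℝ) (Ω : Set (RN N)) (F : (RN N → ℝ) → ℝ)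
    (z u : RN N → ℝ) : Prop :=
  MemWs N s u ∧ (∀ᵐ x ∂(volume.restrict Ωᶜ), u x = z x) ∧
    ∀ v, MemWs0 N s Ω v → Cns N s / 2 * gagB N s univ u v = F v

/-- `v ∈ V = {v ∈ W^{s,2}_0(Ω̄) : (−Δ)^s v ∈ L²(Ω)}` with fractional Laplacian `w`. -/
def IsFracLapOf (N : ℕ) (s : ℝ) (Ω : Set (RN N)) (v w : RN N → ℝ) : Prop :=
  MemWs0 N s Ω v ∧ MemLp w 2 (volume.restrict Ω) ∧
    ∀ φ, MemWs0 N s Ω φ → Cns N s / 2 * gagB N s univ v φ = ∫ x in Ω, w x * φ x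

/-- Very-weak solution of the Dirichlet exterior value problem
`(−Δ)^s u = F in Ω`, `u = z in ℝ^N∖Ω`. -/
def IsVeryWeakSolDirichlet (N : ℕ) (s : ℝ) (Ω : Set (RN N)) (F : (RN N → ℝ) → ℝ)
    (z u : RN N → ℝ) : Prop :=
  MemLp u 2 volume ∧ (∀ᵐ x ∂(volume.restrict Ωᶜ), u x = z x) ∧
    ∀ v w, IsFracLapOf N s Ω v w →
      ∫ x in Ω, u x * w x = F v - ∫ x in Ωᶜ, z x * Iop N s Ω v x

/-- Membership in `W^{s,2}_{Ω,g}`. -/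
def MemWg (N : ℕ) (s : ℝ) (Ω : Set (RN N)) (g : RN N → ℝ) (u : RN N → ℝ) : Prop :=
  Measurable u ∧ (∫⁻ x in Ω, ENNReal.ofReal ((u x) ^ 2)) < ⊤ ∧
    (∫⁻ x in Ωᶜ, ENNReal.ofReal (|g x| * (u x) ^ 2)) < ⊤ ∧
    gagE N s (QSet Ω) u < ⊤

/-- Squared `W^{s,2}_{Ω,g}`-norm. -/
def WgNormSq (N : ℕ) (s : ℝ) (Ω : Set (RN N)) (g : RN N → ℝ) (u : RN N → ℝ) : ℝ :=
  (∫ x in Ω, (u x) ^ 2) + (∫ x in Ωᶜ, |g x| * (u x) ^ 2) + (gagE N s (QSet Ω) u).toReal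

/-- The measure `μ = κ dx` on `ℝ^N ∖ Ω`. -/
def muMeas {N : ℕ} (Ω : Set (RN N)) (κ : RN N → ℝ) : Measure (RN N) :=
  (volume.restrict Ωᶜ).withDensity fun x => ENNReal.ofReal (κ x)

/-- Assumption (A) on the coefficient `κ`. -/
structure AssumpA {N : ℕ} (Ω : Set (RN N)) (κ : RN N → ℝ) : Prop where
  meas : Measurable κ
  nonneg : ∀ x, 0 ≤ κ x
  memL1 : IntegrableOn κ Ωᶜ
  memLinfty : ∃ Cb : ℝ, ∀ᵐ x ∂(volume.restrict Ωᶜ), κ x ≤ Cb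
  cpt : IsCompact (tsupport κ)
  suppSubset : tsupport κ ⊆ Ωᶜ
  pos : ∀ᵐ x ∂(volume.restrict (tsupport κ)), 0 < κ x

/-- `F` represents an element of the dual space `(W^{s,2}_{Ω,κ})⋆`. -/
structure MemDualWkap (N : ℕ) (s : ℝ) (Ω : Set (RN N)) (κ : RN N → ℝ)
    (F : (RN N → ℝ) → ℝ) : Prop where
  congr : ∀ u v, MemWg N s Ω κ u → MemWg N s Ω κ v → u =ᵐ[volume] v → F u = F v
  map_add : ∀ u v, MemWg N s Ω κ u → MemWg N s Ω κ v → F (u + v) = F u + F v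
  map_smul : ∀ (c : ℝ) u, MemWg N s Ω κ u → F (c • u) = c * F u
  bdd : ∃ M : ℝ, ∀ u, MemWg N s Ω κ u → |F u| ≤ M * Real.sqrt (WgNormSq N s Ω κ u)

/-- Dual norm on `(W^{s,2}_{Ω,κ})⋆`. -/
def dualNormWkap (N : ℕ) (s : ℝ) (Ω : Set (RN N)) (κ : RN N → ℝ)
    (F : (RN N → ℝ) → ℝ) : ℝ :=
  sInf {M : ℝ | 0 ≤ M ∧ ∀ u, MemWg N s Ω κ u → |F u| ≤ M * Real.sqrt (WgNormSq N s Ω κ u)}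

/-- Weak solution of the Robin exterior value problem
`(−Δ)^s u = F in Ω`, `𝒩_s u + κ u = κ z in ℝ^N∖Ω`. -/
def IsWeakSolRobin (N : ℕ) (s : ℝ) (Ω : Set (RN N)) (κ : RN N → ℝ)
    (F : (RN N → ℝ) → ℝ) (z u : RN N → ℝ) : Prop :=
  MemWg N s Ω κ u ∧
    ∀ v, MemWg N s Ω κ v →
      gagB N s (QSet Ω) u v + ∫ x in Ωᶜ, κ x * u x * v x =
        F v + ∫ x in Ωᶜ, κ x * z x * v x

/-- Weak solution of the regularized (Robin-penalized) problem with parameter `n`: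
`(−Δ)^s u = 0 in Ω`, `𝒩_s u + nκ u = nκ z in ℝ^N∖Ω`. -/
def IsWeakSolPen (N : ℕ) (s : ℝ) (Ω : Set (RN N)) (κ : RN N → ℝ) (n : ℕ)
    (z u : RN N → ℝ) : Prop :=
  MemWg N s Ω κ u ∧ (∫⁻ x in Ωᶜ, ENNReal.ofReal ((u x) ^ 2)) < ⊤ ∧
    ∀ v, MemWg N s Ω κ v → (∫⁻ x in Ωᶜ, ENNReal.ofReal ((v x) ^ 2)) < ⊤ →
      Cns N s / 2 * gagB N s (QSet Ω) u v + n * ∫ x in Ωᶜ, κ x * u x * v x =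
        n * ∫ x in Ωᶜ, κ x * z x * v x

section A
variable {N : ℕ} {s : ℝ}

lemma Kden_nonneg (x y : RN N) : 0 ≤ Kden N s x y := Real.rpow_nonneg (norm_nonneg _) _

lemma Kden_pos (hs : 0 < (N:ℝ) + 2*s) {x y : RN N} (h : x ≠ y) : 0 < Kden N s x y :=
  Real.rpow_pos_of_pos (by rwa [norm_pos_iff, sub_ne_zero]) _

lemma Kden_measurable (hs : 0 ≤ (N:ℝ) + 2*s) :
    Measurable (fun p : RN N × RN N => Kden N s p.1 p.2) := by
  apply Continuous.measurable
  exact (Continuous.norm (continuous_fst.sub continuous_snd)).rpow_const (fun _ => Or.inr hs)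

lemma gag_meas (hs : 0 ≤ (N:ℝ) + 2*s) {u v : RN N → ℝ} (hu : Measurable u) (hv : Measurable v) :
    Measurable (fun p : RN N × RN N => (u p.1 - u p.2) * (v p.1 - v p.2) / Kden N s p.1 p.2) :=
  (((hu.comp measurable_fst).sub (hu.comp measurable_snd)).mul
    ((hv.comp measurable_fst).sub (hv.comp measurable_snd))).div (Kden_measurable hs)

lemma gag_self_int (hs : 0 ≤ (N:ℝ) + 2*s) {u : RN N → ℝ} (hu : Measurable u)
    {A : Set (RN N × RN N)} (hfin : gagE N s A u < ⊤) :
    IntegrableOn (fun p : RN N × RN N => (u p.1 - u p.2) ^ 2 / Kden N s p.1 p.2) A := by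
  have hm : Measurable (fun p : RN N × RN N => (u p.1 - u p.2) ^ 2 / Kden N s p.1 p.2) :=
    (((hu.comp measurable_fst).sub (hu.comp measurable_snd)).pow_const 2).div (Kden_measurable hs)
  refine ⟨hm.aestronglyMeasurable, ?_⟩
  rw [hasFiniteIntegral_iff_ofReal (ae_of_all _ fun p => div_nonneg (sq_nonneg _) (Kden_nonneg _ _))]
  exact hfin

lemma gag_cross_int (hs : 0 ≤ (N:ℝ) + 2*s) {u v : RN N → ℝ} (hu : Measurable u) (hv : Measurable v)
    {A : Set (RN N × RN N)} (hfu : gagE N s A u < ⊤) (hfv : gagE N s A v < ⊤) :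
    IntegrableOn (fun p : RN N × RN N =>
      (u p.1 - u p.2) * (v p.1 - v p.2) / Kden N s p.1 p.2) A := by
  apply Integrable.mono' (((gag_self_int hs hu hfu).add (gag_self_int hs hv hfv)).div_const 2)
    (gag_meas hs hu hv).aestronglyMeasurable
  refine ae_of_all _ fun p => ?_
  simp only [Pi.add_apply]
  have hKnn : 0 ≤ Kden N s p.1 p.2 := Kden_nonneg _ _
  have h1 : |(u p.1 - u p.2) * (v p.1 - v p.2)| ≤
      ((u p.1 - u p.2) ^ 2 + (v p.1 - v p.2) ^ 2) / 2 := by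
    rw [abs_mul]
    nlinarith [sq_nonneg (|u p.1 - u p.2| - |v p.1 - v p.2|), sq_abs (u p.1 - u p.2),
      sq_abs (v p.1 - v p.2), abs_nonneg (u p.1 - u p.2), abs_nonneg (v p.1 - v p.2)]
  rcases eq_or_lt_of_le hKnn with h0 | hpos
  · rw [Real.norm_eq_abs, ← h0, div_zero, abs_zero]
    simp [div_zero]
  · rw [Real.norm_eq_abs, abs_div, abs_of_nonneg hKnn]
    calc |(u p.1 - u p.2) * (v p.1 - v p.2)| / Kden N s p.1 p.2
        ≤ (((u p.1 - u p.2) ^ 2 + (v p.1 - v p.2) ^ 2) / 2) / Kden N s p.1 p.2 := by gcongr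
      _ = ((u p.1 - u p.2) ^ 2 / Kden N s p.1 p.2 + (v p.1 - v p.2) ^ 2 / Kden N s p.1 p.2) / 2 := by
          ring

lemma gagB_symm (A : Set (RN N × RN N)) (u v : RN N → ℝ) :
    gagB N s A u v = gagB N s A v u := by
  unfold gagB; exact integral_congr_ae (ae_of_all _ fun p => by ring)

lemma gagB_lincomb (A : Set (RN N × RN N)) (a b : ℝ) (u w v : RN N → ℝ)
    (hu : IntegrableOn (fun p : RN N × RN N =>
      (u p.1 - u p.2) * (v p.1 - v p.2) / Kden N s p.1 p.2) A)
    (hw : IntegrableOn (fun p : RN N × RN N =>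
      (w p.1 - w p.2) * (v p.1 - v p.2) / Kden N s p.1 p.2) A) :
    gagB N s A (fun x => a * u x + b * w x) v = a * gagB N s A u v + b * gagB N s A w v := by
  unfold gagB
  rw [← integral_const_mul, ← integral_const_mul, ← integral_add (hu.const_mul a) (hw.const_mul b)]
  exact integral_congr_ae (ae_of_all _ fun p => by simp only; ring)

lemma gagB_self (hs : 0 ≤ (N:ℝ) + 2*s) {u : RN N → ℝ} (hu : Measurable u)
    (A : Set (RN N × RN N)) :
    gagB N s A u u = (gagE N s A u).toReal := by
  unfold gagB gagE
  rw [integral_eq_lintegral_of_nonneg_ae (ae_of_all _ fun p => by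
      exact div_nonneg (mul_self_nonneg _) (Kden_nonneg _ _))
    (gag_meas hs hu hu).aestronglyMeasurable]
  congr 1
  exact lintegral_congr fun p => by rw [sq]

lemma gagB_self_nonneg (hs : 0 ≤ (N:ℝ) + 2*s) {u : RN N → ℝ} (hu : Measurable u)
    (A : Set (RN N × RN N)) : 0 ≤ gagB N s A u u := by
  rw [gagB_self hs hu]; exact ENNReal.toReal_nonneg
end A


section B
variable {N : ℕ} {s : ℝ} {Ω : Set (RN N)} {κ : RN N → ℝ}

lemma L2mul {α} [MeasurableSpace α] {μ : Measure α} {f g : α → ℝ}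
    (hf : MemLp f 2 μ) (hg : MemLp g 2 μ) : Integrable (fun x => f x * g x) μ := by
  apply Integrable.mono' ((hf.integrable_sq.add hg.integrable_sq).div_const 2)
    (hf.1.mul hg.1)
  refine ae_of_all _ fun x => ?_
  simp only [Pi.add_apply, Pi.mul_apply, Real.norm_eq_abs, abs_mul]
  nlinarith [sq_nonneg (|f x| - |g x|), sq_abs (f x), sq_abs (g x), abs_nonneg (f x),
    abs_nonneg (g x)]

lemma integral_mu (hκm : Measurable κ) (hκnn : ∀ x, 0 ≤ κ x) (g : RN N → ℝ) :
    ∫ x, g x ∂(muMeas Ω κ) = ∫ x in Ωᶜ, κ x * g x := by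
  unfold muMeas
  have h1 : (fun x => ENNReal.ofReal (κ x)) = fun x => ((κ x).toNNReal : ℝ≥0∞) := rfl
  rw [h1, integral_withDensity_eq_integral_smul hκm.real_toNNReal g]
  exact integral_congr_ae (ae_of_all _ fun x => by
    simp [NNReal.smul_def, Real.coe_toNNReal _ (hκnn x)])

lemma memL2_Omega_of_MemWg {u : RN N → ℝ} (hu : MemWg N s Ω κ u) :
    MemLp u 2 (volume.restrict Ω) := by
  rw [memLp_two_iff_integrable_sq hu.1.aestronglyMeasurable]
  refine ⟨(hu.1.pow_const 2).aestronglyMeasurable, ?_⟩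
  rw [hasFiniteIntegral_iff_ofReal (ae_of_all _ fun x => sq_nonneg _)]
  exact hu.2.1

lemma memL2_mu_of_MemWg (hκm : Measurable κ) (hκnn : ∀ x, 0 ≤ κ x) {u : RN N → ℝ}
    (hu : MemWg N s Ω κ u) : MemLp u 2 (muMeas Ω κ) := by
  rw [memLp_two_iff_integrable_sq hu.1.aestronglyMeasurable]
  refine ⟨(hu.1.pow_const 2).aestronglyMeasurable, ?_⟩
  rw [hasFiniteIntegral_iff_ofReal (ae_of_all _ fun x => sq_nonneg _)]
  unfold muMeas
  rw [lintegral_withDensity_eq_lintegral_mul _ hκm.ennreal_ofReal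
    ((hu.1.pow_const 2).ennreal_ofReal)]
  have heq : ((fun x => ENNReal.ofReal (κ x)) * fun x => ENNReal.ofReal (u x ^ 2))
      = fun x => ENNReal.ofReal (|κ x| * u x ^ 2) := funext fun x => by
    simp only [Pi.mul_apply, abs_of_nonneg (hκnn x)]
    exact (ENNReal.ofReal_mul (hκnn x)).symm
  rw [heq]
  exact hu.2.2.1

lemma mu_ac : muMeas Ω κ ≪ (volume : Measure (RN N)) :=
  (withDensity_absolutelyContinuous _ _).trans
    (Measure.absolutelyContinuous_of_le Measure.restrict_le_self)

lemma kappa_ae_zero (hκm : Measurable κ) (hκnn : ∀ x, 0 ≤ κ x) (hμ : muMeas Ω κ = 0) :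
    ∀ᵐ x ∂(volume.restrict Ωᶜ), κ x = 0 := by
  have h0 : ∫⁻ x in Ωᶜ, ENNReal.ofReal (κ x) = 0 := by
    have := congrArg (fun m : Measure (RN N) => m univ) hμ
    simpa [muMeas, withDensity_apply _ MeasurableSet.univ, Measure.restrict_univ] using this
  have := (lintegral_eq_zero_iff hκm.ennreal_ofReal).1 h0
  filter_upwards [this] with x hx
  have : κ x ≤ 0 := ENNReal.ofReal_eq_zero.1 hx
  linarith [hκnn x]

lemma const_zero_of_ae (hμ : muMeas Ω κ ≠ 0) {c : ℝ}
    (h : (fun _ : RN N => c) =ᵐ[muMeas Ω κ] (fun _ => (0:ℝ))) : c = 0 := by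
  by_contra hc
  apply hμ
  have : {x : RN N | ¬ (fun _ : RN N => c) x = (fun _ => (0:ℝ)) x} = univ := by
    ext x; simp [hc]
  have h2 := h
  rw [Filter.EventuallyEq, ae_iff, this] at h2
  exact Measure.measure_univ_eq_zero.1 h2

lemma lint_lincomb {α} [MeasurableSpace α] {μ : Measure α} {c u w : α → ℝ}
    (hc : ∀ x, 0 ≤ c x) (hcm : Measurable c) (hum : Measurable u) (hwm : Measurable w)
    (a b : ℝ) :
    ∫⁻ x, ENNReal.ofReal (c x * (a * u x + b * w x) ^ 2) ∂μ ≤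
      ENNReal.ofReal (2*a^2) * ∫⁻ x, ENNReal.ofReal (c x * u x ^ 2) ∂μ +
      ENNReal.ofReal (2*b^2) * ∫⁻ x, ENNReal.ofReal (c x * w x ^ 2) ∂μ := by
  have step : ∀ x, ENNReal.ofReal (c x * (a * u x + b * w x) ^ 2) ≤
      ENNReal.ofReal (2*a^2) * ENNReal.ofReal (c x * u x ^ 2) +
      ENNReal.ofReal (2*b^2) * ENNReal.ofReal (c x * w x ^ 2) := fun x => by
    rw [← ENNReal.ofReal_mul (p := 2*a^2) (by positivity),
      ← ENNReal.ofReal_mul (p := 2*b^2) (by positivity),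
      ← ENNReal.ofReal_add (mul_nonneg (by positivity) (mul_nonneg (hc x) (sq_nonneg _)))
        (mul_nonneg (by positivity) (mul_nonneg (hc x) (sq_nonneg _)))]
    apply ENNReal.ofReal_le_ofReal
    have h2 : (a * u x + b * w x) ^ 2 ≤ 2*a^2 * u x ^2 + 2*b^2 * w x ^2 := by
      nlinarith [sq_nonneg (a * u x - b * w x)]
    calc c x * (a * u x + b * w x) ^ 2 ≤ c x * (2*a^2 * u x ^2 + 2*b^2 * w x ^2) :=
        mul_le_mul_of_nonneg_left h2 (hc x)
      _ = 2*a^2 * (c x * u x ^ 2) + 2*b^2 * (c x * w x ^ 2) := by ring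
  calc ∫⁻ x, ENNReal.ofReal (c x * (a * u x + b * w x) ^ 2) ∂μ
      ≤ ∫⁻ x, (ENNReal.ofReal (2*a^2) * ENNReal.ofReal (c x * u x ^ 2) +
        ENNReal.ofReal (2*b^2) * ENNReal.ofReal (c x * w x ^ 2)) ∂μ := lintegral_mono step
    _ = _ := by
        rw [lintegral_add_left (f := fun x => ENNReal.ofReal (2*a^2) * ENNReal.ofReal (c x * u x ^ 2)) (by fun_prop),
          lintegral_const_mul (f := fun x => ENNReal.ofReal (c x * u x ^ 2)) _ (by fun_prop),
          lintegral_const_mul (f := fun x => ENNReal.ofReal (c x * w x ^ 2)) _ (by fun_prop)]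

end B


section C
variable {N : ℕ} {s : ℝ} {Ω : Set (RN N)} {κ : RN N → ℝ}

lemma MemWg_lincomb (hs : 0 ≤ (N:ℝ) + 2*s) (hκm : Measurable κ) (a b : ℝ)
    {u w : RN N → ℝ} (hu : MemWg N s Ω κ u) (hw : MemWg N s Ω κ w) :
    MemWg N s Ω κ (fun x => a * u x + b * w x) := by
  obtain ⟨hum, hu1, hu2, hu3⟩ := hu
  obtain ⟨hwm, hw1, hw2, hw3⟩ := hw
  have fin2 : ∀ {X Y : ℝ≥0∞}, X < ⊤ → Y < ⊤ → ∀ p q : ℝ,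
      ENNReal.ofReal p * X + ENNReal.ofReal q * Y < ⊤ := fun hX hY p q =>
    ENNReal.add_lt_top.2 ⟨ENNReal.mul_lt_top ENNReal.ofReal_lt_top hX,
      ENNReal.mul_lt_top ENNReal.ofReal_lt_top hY⟩
  refine ⟨(hum.const_mul a).add (hwm.const_mul b), ?_, ?_, ?_⟩
  · have h1 := lint_lincomb (μ := volume.restrict Ω) (c := fun _ => (1:ℝ))
      (fun _ => zero_le_one) measurable_const hum hwm a b
    simp only [one_mul] at h1
    exact lt_of_le_of_lt h1 (fin2 hu1 hw1 _ _)
  · have h1 := lint_lincomb (μ := volume.restrict Ωᶜ) (c := fun x => |κ x|)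
      (fun x => abs_nonneg _) hκm.abs hum hwm a b
    exact lt_of_le_of_lt h1 (fin2 hu2 hw2 _ _)
  · have h1 := lint_lincomb (μ := (volume : Measure (RN N × RN N)).restrict (QSet Ω))
      (c := fun p : RN N × RN N => (Kden N s p.1 p.2)⁻¹)
      (fun p => inv_nonneg.2 (Kden_nonneg _ _)) (Kden_measurable hs).inv
      (u := fun p : RN N × RN N => u p.1 - u p.2)
      ((hum.comp measurable_fst).sub (hum.comp measurable_snd))
      (w := fun p : RN N × RN N => w p.1 - w p.2)
      ((hwm.comp measurable_fst).sub (hwm.comp measurable_snd)) a b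
    have e1 : gagE N s (QSet Ω) (fun x => a * u x + b * w x) =
        ∫⁻ p in QSet Ω, ENNReal.ofReal ((Kden N s p.1 p.2)⁻¹ *
          (a * (u p.1 - u p.2) + b * (w p.1 - w p.2)) ^ 2) := by
      unfold gagE
      exact lintegral_congr fun p => congrArg ENNReal.ofReal (by simp only; ring)
    have e2 : ∫⁻ p in QSet Ω, ENNReal.ofReal ((Kden N s p.1 p.2)⁻¹ * (u p.1 - u p.2) ^ 2)
        = gagE N s (QSet Ω) u := by
      unfold gagE; exact lintegral_congr fun p => congrArg ENNReal.ofReal (by ring)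
    have e3 : ∫⁻ p in QSet Ω, ENNReal.ofReal ((Kden N s p.1 p.2)⁻¹ * (w p.1 - w p.2) ^ 2)
        = gagE N s (QSet Ω) w := by
      unfold gagE; exact lintegral_congr fun p => congrArg ENNReal.ofReal (by ring)
    rw [e1]
    rw [e2, e3] at h1
    exact lt_of_le_of_lt h1 (fin2 hu3 hw3 _ _)

lemma MemWg_sub (hs : 0 ≤ (N:ℝ) + 2*s) (hκm : Measurable κ)
    {u w : RN N → ℝ} (hu : MemWg N s Ω κ u) (hw : MemWg N s Ω κ w) :
    MemWg N s Ω κ (fun x => u x - w x) := by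
  have := MemWg_lincomb hs hκm 1 (-1) hu hw
  have heq : (fun x => 1 * u x + (-1) * w x) = fun x => u x - w x := funext fun x => by ring
  rwa [heq] at this

lemma robin_eq_mu (hκm : Measurable κ) (hκnn : ∀ x, 0 ≤ κ x) {F : (RN N → ℝ) → ℝ}
    {z u : RN N → ℝ} (hsol : IsWeakSolRobin N s Ω κ F z u) {v : RN N → ℝ}
    (hv : MemWg N s Ω κ v) :
    gagB N s (QSet Ω) u v + ∫ x, u x * v x ∂(muMeas Ω κ) =
      F v + ∫ x, z x * v x ∂(muMeas Ω κ) := by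
  have heq := hsol.2 v hv
  have e1 : ∫ x in Ωᶜ, κ x * u x * v x = ∫ x, u x * v x ∂(muMeas Ω κ) := by
    rw [integral_mu hκm hκnn (fun x => u x * v x)]
    exact integral_congr_ae (ae_of_all _ fun x => (mul_assoc _ _ _))
  have e2 : ∫ x in Ωᶜ, κ x * z x * v x = ∫ x, z x * v x ∂(muMeas Ω κ) := by
    rw [integral_mu hκm hκnn (fun x => z x * v x)]
    exact integral_congr_ae (ae_of_all _ fun x => (mul_assoc _ _ _))
  rw [e1, e2] at heq
  exact heq

lemma gagB_sub_left (hs : 0 ≤ (N:ℝ) + 2*s) {u w v : RN N → ℝ}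
    (hum : Measurable u) (hwm : Measurable w) (hvm : Measurable v)
    (hu3 : gagE N s (QSet Ω) u < ⊤) (hw3 : gagE N s (QSet Ω) w < ⊤)
    (hv3 : gagE N s (QSet Ω) v < ⊤) :
    gagB N s (QSet Ω) (fun x => u x - w x) v =
      gagB N s (QSet Ω) u v - gagB N s (QSet Ω) w v := by
  have h := gagB_lincomb (s := s) (QSet Ω) 1 (-1) u w v
    (gag_cross_int hs hum hvm hu3 hv3) (gag_cross_int hs hwm hvm hw3 hv3)
  have heq : (fun x => 1 * u x + (-1) * w x) = fun x => u x - w x := funext fun x => by ring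
  rw [heq] at h
  rw [h]; ring

lemma fact1 (hs : 0 ≤ (N:ℝ) + 2*s) (hκm : Measurable κ) (hκnn : ∀ x, 0 ≤ κ x)
    {z z' u u' p w : RN N → ℝ}
    (hu : IsWeakSolRobin N s Ω κ (fun _ => 0) z u)
    (hu' : IsWeakSolRobin N s Ω κ (fun _ => 0) z' u')
    (hp : IsWeakSolRobin N s Ω κ (fun v => ∫ x in Ω, w x * v x) (fun _ => 0) p)
    (hw : MemLp w 2 (volume.restrict Ω))
    (hz : MemLp z 2 (muMeas Ω κ)) (hz' : MemLp z' 2 (muMeas Ω κ)) :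
    ∫ x in Ω, w x * (u x - u' x) = ∫ x, (z x - z' x) * p x ∂(muMeas Ω κ) := by
  set μ := muMeas Ω κ with hμdef
  have hpL2 : MemLp p 2 μ := memL2_mu_of_MemWg hκm hκnn hp.1
  have huL2 : MemLp u 2 μ := memL2_mu_of_MemWg hκm hκnn hu.1
  have hu'L2 : MemLp u' 2 μ := memL2_mu_of_MemWg hκm hκnn hu'.1
  have key : ∀ (zz uu : RN N → ℝ), IsWeakSolRobin N s Ω κ (fun _ => 0) zz uu →
      ∫ x in Ω, w x * uu x = ∫ x, zz x * p x ∂μ := by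
    intro zz uu huu
    have hpu := robin_eq_mu hκm hκnn hp huu.1
    have hup := robin_eq_mu hκm hκnn huu hp.1
    simp only [zero_mul, integral_zero] at hpu hup
    have hsymm : gagB N s (QSet Ω) p uu = gagB N s (QSet Ω) uu p := gagB_symm _ _ _
    have hcomm : ∫ x, p x * uu x ∂μ = ∫ x, uu x * p x ∂μ :=
      integral_congr_ae (ae_of_all _ fun x => mul_comm _ _)
    linarith
  have k1 := key z u hu
  have k2 := key z' u' hu'
  have lhs : ∫ x in Ω, w x * (u x - u' x) =
      (∫ x in Ω, w x * u x) - ∫ x in Ω, w x * u' x := by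
    rw [show (fun x => w x * (u x - u' x)) = fun x => w x * u x - w x * u' x from
      funext fun x => by ring]
    exact integral_sub (L2mul hw (memL2_Omega_of_MemWg hu.1))
      (L2mul hw (memL2_Omega_of_MemWg hu'.1))
  have rhs : ∫ x, (z x - z' x) * p x ∂μ =
      (∫ x, z x * p x ∂μ) - ∫ x, z' x * p x ∂μ := by
    rw [show (fun x => (z x - z' x) * p x) = fun x => z x * p x - z' x * p x from
      funext fun x => by ring]
    exact integral_sub (L2mul hz hpL2) (L2mul hz' hpL2)
  rw [lhs, rhs, k1, k2]

end C


section D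
variable {N : ℕ} {s : ℝ} {Ω : Set (RN N)} {κ : RN N → ℝ}

lemma diag_null (hN : 1 ≤ N) :
    ∀ᵐ p : RN N × RN N ∂(volume : Measure (RN N × RN N)), p.1 ≠ p.2 := by
  haveI : Nontrivial (RN N) := by
    refine ⟨0, EuclideanSpace.single ⟨0, hN⟩ 1, fun h => ?_⟩
    have := congrArg (fun v : RN N => v ⟨0, hN⟩) h
    simp [EuclideanSpace.single_apply] at this
  haveI : NeBot (𝓝[≠] (0 : RN N)) := Module.punctured_nhds_neBot ℝ _ _
  have hmeas : MeasurableSet {p : RN N × RN N | p.1 = p.2} := by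
    have : {p : RN N × RN N | p.1 = p.2} = (fun p : RN N × RN N => p.1 - p.2) ⁻¹' {0} := by
      ext p; simp [sub_eq_zero]
    rw [this]
    exact (measurableSet_singleton 0).preimage (measurable_fst.sub measurable_snd)
  rw [ae_iff]
  have hset : {p : RN N × RN N | ¬ p.1 ≠ p.2} = {p : RN N × RN N | p.1 = p.2} := by
    ext p; simp
  rw [hset, Measure.volume_eq_prod, Measure.prod_apply hmeas]
  have hz : ∀ x : RN N, volume (Prod.mk x ⁻¹' {p : RN N × RN N | p.1 = p.2}) = 0 := by
    intro x
    have : Prod.mk x ⁻¹' {p : RN N × RN N | p.1 = p.2} = {x} := by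
      ext y; simp [eq_comm]
    rw [this]
    exact measure_singleton x
  simp [hz]

lemma robin_unique (hN : 1 ≤ N) (hs : 0 < (N:ℝ) + 2*s) (hκm : Measurable κ)
    (hκnn : ∀ x, 0 ≤ κ x) (hΩo : IsOpen Ω) (hμ : muMeas Ω κ ≠ 0)
    {F : (RN N → ℝ) → ℝ} {z u1 u2 : RN N → ℝ}
    (h1 : IsWeakSolRobin N s Ω κ F z u1) (h2 : IsWeakSolRobin N s Ω κ F z u2) :
    u1 =ᵐ[volume.restrict Ω] u2 := by
  by_cases hΩe : Ω = ∅
  · simp [hΩe, Filter.EventuallyEq]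
  have hΩne : Ω.Nonempty := Set.nonempty_iff_ne_empty.2 hΩe
  set μ := muMeas Ω κ with hμdef
  set d := fun x => u1 x - u2 x with hd
  have hdW : MemWg N s Ω κ d := MemWg_sub hs.le hκm h1.1 h2.1
  have hdm : Measurable d := hdW.1
  have hdL2 : MemLp d 2 μ := memL2_mu_of_MemWg hκm hκnn hdW
  -- the difference satisfies the homogeneous equation; test with v = d
  have e1 := robin_eq_mu hκm hκnn h1 hdW
  have e2 := robin_eq_mu hκm hκnn h2 hdW
  have hgagsub : gagB N s (QSet Ω) d d =
      gagB N s (QSet Ω) u1 d - gagB N s (QSet Ω) u2 d :=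
    gagB_sub_left hs.le h1.1.1 h2.1.1 hdm h1.1.2.2.2 h2.1.2.2.2 hdW.2.2.2
  have hintsub : ∫ x, d x * d x ∂μ = (∫ x, u1 x * d x ∂μ) - ∫ x, u2 x * d x ∂μ := by
    rw [show (fun x => d x * d x) = fun x => u1 x * d x - u2 x * d x from
      funext fun x => by simp only [hd]; ring]
    exact integral_sub (L2mul (memL2_mu_of_MemWg hκm hκnn h1.1) hdL2)
      (L2mul (memL2_mu_of_MemWg hκm hκnn h2.1) hdL2)
  have hzero : gagB N s (QSet Ω) d d + ∫ x, d x * d x ∂μ = 0 := by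
    rw [hgagsub, hintsub]; linarith
  have hg0 : 0 ≤ gagB N s (QSet Ω) d d := gagB_self_nonneg hs.le hdm _
  have hi0 : 0 ≤ ∫ x, d x * d x ∂μ := integral_nonneg fun x => mul_self_nonneg _
  have hgag0 : gagB N s (QSet Ω) d d = 0 := by linarith
  have hint0 : ∫ x, d x * d x ∂μ = 0 := by linarith
  -- μ-a.e. vanishing
  have hdmu0 : d =ᵐ[μ] fun _ => (0:ℝ) := by
    have hint := (integral_eq_zero_iff_of_nonneg_ae
      (ae_of_all _ fun x => mul_self_nonneg (d x)) (L2mul hdL2 hdL2)).1 hint0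
    filter_upwards [hint] with x hx
    exact mul_self_eq_zero.1 hx
  -- gagE = 0 gives d a.e. constant
  have hgagE0 : gagE N s (QSet Ω) d = 0 := by
    have := gagB_self hs.le hdm (QSet Ω)
    rw [hgag0] at this
    rcases (ENNReal.toReal_eq_zero_iff _).1 this.symm with h | h
    · exact h
    · exact absurd h hdW.2.2.2.ne
  have h3 : ∀ᵐ p ∂((volume : Measure (RN N × RN N)).restrict (QSet Ω)),
      ENNReal.ofReal ((d p.1 - d p.2) ^ 2 / Kden N s p.1 p.2) = 0 := by
    have hm : Measurable (fun p : RN N × RN N =>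
        ENNReal.ofReal ((d p.1 - d p.2) ^ 2 / Kden N s p.1 p.2)) :=
      ((((hdm.comp measurable_fst).sub (hdm.comp measurable_snd)).pow_const 2).div
        (Kden_measurable hs.le)).ennreal_ofReal
    exact (lintegral_eq_zero_iff hm).1 hgagE0
  have hdiagQ : ∀ᵐ p ∂((volume : Measure (RN N × RN N)).restrict (QSet Ω)),
      p.1 ≠ p.2 := ae_restrict_of_ae (diag_null hN)
  have hQ : ∀ᵐ p ∂((volume : Measure (RN N × RN N)).restrict (QSet Ω)),
      d p.1 = d p.2 := by
    filter_upwards [h3, hdiagQ] with p hp hne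
    by_contra hne2
    have hKpos := Kden_pos (s := s) hs hne
    have hsq : 0 < (d p.1 - d p.2) ^ 2 :=
      lt_of_le_of_ne (sq_nonneg _) (Ne.symm (pow_ne_zero 2 (sub_ne_zero.2 hne2)))
    have := div_pos hsq hKpos
    have hle : (d p.1 - d p.2) ^ 2 / Kden N s p.1 p.2 ≤ 0 := ENNReal.ofReal_eq_zero.1 hp
    linarith
  have hsub : Ω ×ˢ (univ : Set (RN N)) ⊆ QSet Ω := by
    intro p hp
    simp only [QSet, Set.mem_compl_iff, Set.mem_prod] at *
    tauto
  have hΩuniv := ae_restrict_of_ae_restrict_of_subset hsub hQ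
  have hmeq : (volume : Measure (RN N × RN N)).restrict (Ω ×ˢ univ) =
      (volume.restrict Ω).prod volume := by
    rw [Measure.volume_eq_prod, ← Measure.prod_restrict, Measure.restrict_univ]
  rw [hmeq] at hΩuniv
  have hfub := Measure.ae_ae_of_ae_prod hΩuniv
  have hpos : volume.restrict Ω ≠ 0 := by
    intro h0
    have : volume Ω = 0 := by
      have := congrArg (fun m : Measure (RN N) => m univ) h0
      simpa [Measure.restrict_apply_univ] using this
    exact absurd this (hΩo.measure_pos volume hΩne).ne'
  haveI := ae_neBot.2 hpos
  obtain ⟨x0, hx0⟩ := hfub.exists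
  have dconst : d =ᵐ[volume] fun _ => d x0 := by
    filter_upwards [hx0] with y hy using hy.symm
  have dconstμ : d =ᵐ[μ] fun _ => d x0 := dconst.filter_mono mu_ac.ae_le
  have hc0 : d x0 = 0 := const_zero_of_ae hμ (dconstμ.symm.trans hdmu0)
  have : d =ᵐ[volume.restrict Ω] fun _ => (0:ℝ) :=
    ae_restrict_of_ae (by rw [hc0] at dconst; exact dconst)
  filter_upwards [this] with x hx
  exact sub_eq_zero.1 hx

end D


section E
variable {N : ℕ} {Ω : Set (RN N)}

lemma Jdiff_seg (J : (RN N → ℝ) → ℝ) (DJ : (RN N → ℝ) → (RN N → ℝ))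
    (hJdiff : ∀ u, MemLp u 2 (volume.restrict Ω) → ∀ ε : ℝ, 0 < ε → ∃ δ : ℝ, 0 < δ ∧
      ∀ h : RN N → ℝ, MemLp h 2 (volume.restrict Ω) →
        Real.sqrt (∫ x in Ω, (h x) ^ 2) ≤ δ →
        |J (u + h) - J u - ∫ x in Ω, DJ u x * h x| ≤
          ε * Real.sqrt (∫ x in Ω, (h x) ^ 2))
    {u h : RN N → ℝ} (hu : MemLp u 2 (volume.restrict Ω))
    (hh : MemLp h 2 (volume.restrict Ω)) {ε : ℝ} (hε : 0 < ε) :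
    ∃ δ : ℝ, 0 < δ ∧ ∀ t : ℝ, 0 < t → t ≤ δ →
      |J (fun x => u x + t * h x) - J u - t * ∫ x in Ω, DJ u x * h x| ≤
        ε * (t * Real.sqrt (∫ x in Ω, h x ^ 2)) := by
  obtain ⟨δ0, hδ0, hkey⟩ := hJdiff u hu ε hε
  set sh := Real.sqrt (∫ x in Ω, h x ^ 2) with hshdef
  have hsh : 0 ≤ sh := Real.sqrt_nonneg _
  refine ⟨δ0 / (sh + 1), div_pos hδ0 (by linarith), fun t ht0 htδ => ?_⟩
  have hmem : MemLp (fun x => t * h x) 2 (volume.restrict Ω) := hh.const_mul t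
  have hnorm : Real.sqrt (∫ x in Ω, (t * h x) ^ 2) = t * sh := by
    have e : ∫ x in Ω, (t * h x) ^ 2 = t ^ 2 * ∫ x in Ω, h x ^ 2 := by
      rw [← integral_const_mul]
      exact integral_congr_ae (ae_of_all _ fun x => by ring)
    rw [e, Real.sqrt_mul (sq_nonneg t), Real.sqrt_sq ht0.le]
  have hsmall : Real.sqrt (∫ x in Ω, (t * h x) ^ 2) ≤ δ0 := by
    rw [hnorm]
    have h1 : t * sh ≤ δ0 / (sh + 1) * sh := mul_le_mul_of_nonneg_right htδ hsh
    have h2 : δ0 / (sh + 1) * sh ≤ δ0 := by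
      rw [div_mul_eq_mul_div, div_le_iff₀ (by linarith : (0:ℝ) < sh + 1)]
      nlinarith
    linarith
  have hb := hkey (fun x => t * h x) hmem hsmall
  have hadd : u + (fun x => t * h x) = fun x => u x + t * h x := rfl
  have hint : ∫ x in Ω, DJ u x * (t * h x) = t * ∫ x in Ω, DJ u x * h x := by
    rw [← integral_const_mul]
    exact integral_congr_ae (ae_of_all _ fun x => by ring)
  rw [hadd, hint, hnorm] at hb
  exact hb

lemma grad_ineq (J : (RN N → ℝ) → ℝ) (DJ : (RN N → ℝ) → (RN N → ℝ))
    (hJdiff : ∀ u, MemLp u 2 (volume.restrict Ω) → ∀ ε : ℝ, 0 < ε → ∃ δ : ℝ, 0 < δ ∧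
      ∀ h : RN N → ℝ, MemLp h 2 (volume.restrict Ω) →
        Real.sqrt (∫ x in Ω, (h x) ^ 2) ≤ δ →
        |J (u + h) - J u - ∫ x in Ω, DJ u x * h x| ≤
          ε * Real.sqrt (∫ x in Ω, (h x) ^ 2))
    (hconv : ∀ (u v : RN N → ℝ) (t : ℝ), MemLp u 2 (volume.restrict Ω) →
        MemLp v 2 (volume.restrict Ω) → 0 ≤ t → t ≤ 1 →
        J (t • u + (1 - t) • v) ≤ t * J u + (1 - t) * J v)
    {u v : RN N → ℝ} (hu : MemLp u 2 (volume.restrict Ω))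
    (hv : MemLp v 2 (volume.restrict Ω)) :
    ∫ x in Ω, DJ u x * (v x - u x) ≤ J v - J u := by
  have hh : MemLp (fun x => v x - u x) 2 (volume.restrict Ω) := hv.sub hu
  set I := ∫ x in Ω, DJ u x * (v x - u x) with hI
  set sh := Real.sqrt (∫ x in Ω, (v x - u x) ^ 2) with hsh
  have hsh0 : 0 ≤ sh := Real.sqrt_nonneg _
  suffices hS : ∀ ε : ℝ, 0 < ε → I ≤ J v - J u + ε * (1 + sh) by
    by_contra hlt
    push_neg at hlt
    have hd : 0 < I - (J v - J u) := by linarith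
    have hε : 0 < (I - (J v - J u)) / (2 * (1 + sh)) := by positivity
    have := hS _ hε
    rw [div_mul_eq_mul_div] at this
    have h1sh : (0:ℝ) < 1 + sh := by linarith
    have hc2 : (I - (J v - J u)) * (1 + sh) / (2 * (1 + sh)) = (I - (J v - J u)) / 2 := by
      field_simp
    rw [hc2] at this
    linarith
  intro ε hε
  obtain ⟨δ, hδ, hkey⟩ := Jdiff_seg J DJ hJdiff hu hh hε
  set t := min δ 1 with htdef
  have ht0 : 0 < t := lt_min hδ one_pos
  have ht1 : t ≤ 1 := min_le_right _ _
  have htδ : t ≤ δ := min_le_left _ _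
  have hb := hkey t ht0 htδ
  have hc := hconv v u t hv hu ht0.le ht1
  have heq : (fun x => u x + t * (v x - u x)) = t • v + (1 - t) • u :=
    funext fun x => by
      simp only [Pi.add_apply, Pi.smul_apply, smul_eq_mul]; ring
  rw [heq] at hb
  have h1 : t * I ≤ J (t • v + (1 - t) • u) - J u + ε * (t * sh) := by
    have := abs_le.1 hb
    linarith [this.1]
  have h2 : t * I ≤ t * (J v - J u) + ε * (t * sh) := by
    have : J (t • v + (1 - t) • u) - J u ≤ t * (J v - J u) := by linarith
    linarith
  have h3 : t * I ≤ t * ((J v - J u) + ε * sh) := by nlinarith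
  have h4 : I ≤ (J v - J u) + ε * sh := by
    exact le_of_mul_le_mul_left h3 ht0
  nlinarith
end E


section F
variable {N : ℕ} {s : ℝ} {Ω : Set (RN N)} {κ : RN N → ℝ}

lemma nonneg_of_forall_eps {X M : ℝ} (hM : 0 ≤ M) (h : ∀ ε : ℝ, 0 < ε → 0 ≤ X + ε * M) :
    0 ≤ X := by
  by_contra hX
  push_neg at hX
  have hε : 0 < -X / (M + 1) := div_pos (neg_pos.2 hX) (by linarith)
  have h1 := h _ hε
  have h2 : X + -X / (M + 1) * M = X / (M + 1) := by field_simp; ring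
  rw [h2] at h1
  have : X / (M + 1) < 0 := div_neg_of_neg_of_pos hX (by linarith)
  linarith

lemma VIdecomp (hκm : Measurable κ) (hκnn : ∀ x, 0 ≤ κ x) (ξ : ℝ) {p z z' : RN N → ℝ}
    (hp : MemLp p 2 (muMeas Ω κ)) (hz : MemLp z 2 (muMeas Ω κ))
    (hz' : MemLp z' 2 (muMeas Ω κ)) :
    ∫ x in Ωᶜ, (p x + ξ * z' x) * (z x - z' x) * κ x =
      (∫ x, (z x - z' x) * p x ∂(muMeas Ω κ)) +
        ξ * ∫ x, z' x * (z x - z' x) ∂(muMeas Ω κ) := by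
  have e0 : ∫ x in Ωᶜ, (p x + ξ * z' x) * (z x - z' x) * κ x =
      ∫ x, (p x + ξ * z' x) * (z x - z' x) ∂(muMeas Ω κ) := by
    rw [integral_mu hκm hκnn (fun x => (p x + ξ * z' x) * (z x - z' x))]
    exact integral_congr_ae (ae_of_all _ fun x => by ring)
  have hint1 : Integrable (fun x => (z x - z' x) * p x) (muMeas Ω κ) := L2mul (hz.sub hz') hp
  have hint2 : Integrable (fun x => ξ * (z' x * (z x - z' x))) (muMeas Ω κ) :=
    (L2mul hz' (hz.sub hz')).const_mul ξ
  rw [e0, show (fun x => (p x + ξ * z' x) * (z x - z' x)) =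
      fun x => (z x - z' x) * p x + ξ * (z' x * (z x - z' x)) from funext fun x => by ring,
    integral_add hint1 hint2, integral_const_mul]

lemma sq_expand {μ : Measure (RN N)} {z z' : RN N → ℝ}
    (hz : MemLp z 2 μ) (hz' : MemLp z' 2 μ) :
    ∫ x, z x ^ 2 ∂μ = (∫ x, z' x ^ 2 ∂μ) +
      (2 * ∫ x, z' x * (z x - z' x) ∂μ) + ∫ x, (z x - z' x) ^ 2 ∂μ := by
  have h1 : Integrable (fun x => z' x ^ 2) μ := hz'.integrable_sq
  have h2 : Integrable (fun x => 2 * (z' x * (z x - z' x))) μ :=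
    (L2mul hz' (hz.sub hz')).const_mul 2
  have h3 : Integrable (fun x => (z x - z' x) ^ 2) μ := (hz.sub hz').integrable_sq
  have h23 : Integrable (fun x => 2 * (z' x * (z x - z' x)) + (z x - z' x) ^ 2) μ := h2.add h3
  rw [show (fun x => z x ^ 2) = fun x =>
      z' x ^ 2 + (2 * (z' x * (z x - z' x)) + (z x - z' x) ^ 2) from funext fun x => by ring,
    integral_add h1 h23, integral_add h2 h3, integral_const_mul]
  ring

lemma kint_eq (hκm : Measurable κ) (hκnn : ∀ x, 0 ≤ κ x) (f g : RN N → ℝ) :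
    ∫ x in Ωᶜ, κ x * f x * g x = ∫ x, f x * g x ∂(muMeas Ω κ) := by
  rw [integral_mu hκm hκnn (fun x => f x * g x)]
  exact integral_congr_ae (ae_of_all _ fun x => mul_assoc _ _ _)

end F


/-- First-order optimality conditions for the fractional Robin exterior
control problem: if `z̄` minimizes `𝒥(z) = J(S_R z) + (ξ/2)‖z‖²_{L²(ℝ^N∖Ω,μ)}` over
`Z_ad`, then `∫_{ℝ^N∖Ω} (p̄ + ξ z̄)(z − z̄) dμ ≥ 0` for all `z ∈ Z_ad`, where `p̄` solves
the Robin adjoint equation; the variational inequality is equivalent to `z̄` being the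
unique minimizer of `z ↦ ‖z + p̄/ξ‖_{L²(ℝ^N∖Ω,μ)}` over `Z_ad`; and if `J` is convex, the
variational inequality is sufficient for global optimality. -/
theorem statement14 (N : ℕ) (hN : 1 ≤ N) (s : ℝ) (hs0 : 0 < s) (hs1 : s < 1)
    (Ω : Set (RN N)) (hΩo : IsOpen Ω) (hΩb : Bornology.IsBounded Ω)
    (hΩl : HasLipschitzBoundary Ω)
    (κ : RN N → ℝ) (hκ : AssumpA Ω κ)
    (ξ : ℝ) (hξ : 0 < ξ)
    (SR : (RN N → ℝ) → (RN N → ℝ))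
    (hSR : ∀ z, MemLp z 2 (muMeas Ω κ) →
      IsWeakSolRobin N s Ω κ (fun _ => 0) z (SR z))
    (Zad : Set (RN N → ℝ)) (hZne : Zad.Nonempty)
    (hZsub : ∀ z ∈ Zad, MemLp z 2 (muMeas Ω κ))
    (hZconv : Convex ℝ Zad)
    (hZcl : ∀ (zseq : ℕ → RN N → ℝ) (z0 : RN N → ℝ), (∀ n, zseq n ∈ Zad) →
      MemLp z0 2 (muMeas Ω κ) →
      Tendsto (fun n => ∫ x, (zseq n x - z0 x) ^ 2 ∂(muMeas Ω κ)) atTop (𝓝 0) →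
      z0 ∈ Zad)
    -- `J : L²(Ω) → ℝ` continuously Fréchet differentiable with gradient `DJ`
    (J : (RN N → ℝ) → ℝ) (DJ : (RN N → ℝ) → (RN N → ℝ))
    (hJcongr : ∀ u v, u =ᵐ[volume.restrict Ω] v → J u = J v)
    (hDJmem : ∀ u, MemLp u 2 (volume.restrict Ω) → MemLp (DJ u) 2 (volume.restrict Ω))
    (hJdiff : ∀ u, MemLp u 2 (volume.restrict Ω) → ∀ ε : ℝ, 0 < ε → ∃ δ : ℝ, 0 < δ ∧
      ∀ h : RN N → ℝ, MemLp h 2 (volume.restrict Ω) →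
        Real.sqrt (∫ x in Ω, (h x) ^ 2) ≤ δ →
        |J (u + h) - J u - ∫ x in Ω, DJ u x * h x| ≤
          ε * Real.sqrt (∫ x in Ω, (h x) ^ 2))
    (hDJcont : ∀ u, MemLp u 2 (volume.restrict Ω) → ∀ ε : ℝ, 0 < ε → ∃ δ : ℝ, 0 < δ ∧
      ∀ u' : RN N → ℝ, MemLp u' 2 (volume.restrict Ω) →
        Real.sqrt (∫ x in Ω, (u' x - u x) ^ 2) ≤ δ →
        Real.sqrt (∫ x in Ω, (DJ u' x - DJ u x) ^ 2) ≤ ε)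
    -- `z̄` is a minimizer
    (zbar : RN N → ℝ) (hzbar : zbar ∈ Zad)
    (hmin : ∀ z ∈ Zad, J (SR zbar) + ξ / 2 * ∫ x, (zbar x) ^ 2 ∂(muMeas Ω κ) ≤
      J (SR z) + ξ / 2 * ∫ x, (z x) ^ 2 ∂(muMeas Ω κ))
    -- `p̄` is the unique weak solution of the Robin adjoint problem
    (pbar : RN N → ℝ)
    (hpbar : IsWeakSolRobin N s Ω κ
      (fun v => ∫ x in Ω, DJ (SR zbar) x * v x) (fun _ => 0) pbar) :
    -- (a) the variational inequality
    (∀ z ∈ Zad,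
      0 ≤ ∫ x in Ωᶜ, (pbar x + ξ * zbar x) * (z x - zbar x) * κ x) ∧
    -- (b) equivalence with the projection formula
    ((∀ z ∈ Zad,
        0 ≤ ∫ x in Ωᶜ, (pbar x + ξ * zbar x) * (z x - zbar x) * κ x) ↔
      ((∀ z ∈ Zad,
          Real.sqrt (∫ x, (zbar x + pbar x / ξ) ^ 2 ∂(muMeas Ω κ)) ≤
            Real.sqrt (∫ x, (z x + pbar x / ξ) ^ 2 ∂(muMeas Ω κ))) ∧
        ∀ z ∈ Zad,
          Real.sqrt (∫ x, (z x + pbar x / ξ) ^ 2 ∂(muMeas Ω κ)) ≤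
              Real.sqrt (∫ x, (zbar x + pbar x / ξ) ^ 2 ∂(muMeas Ω κ)) →
            z =ᵐ[muMeas Ω κ] zbar)) ∧
    -- (c) sufficiency under convexity of `J`
    ((∀ (u v : RN N → ℝ) (t : ℝ), MemLp u 2 (volume.restrict Ω) →
        MemLp v 2 (volume.restrict Ω) → 0 ≤ t → t ≤ 1 →
        J (t • u + (1 - t) • v) ≤ t * J u + (1 - t) * J v) →
      ∀ z' ∈ Zad, ∀ p' : RN N → ℝ,
        IsWeakSolRobin N s Ω κ
          (fun v => ∫ x in Ω, DJ (SR z') x * v x) (fun _ => 0) p' →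
        (∀ z ∈ Zad,
          0 ≤ ∫ x in Ωᶜ, (p' x + ξ * z' x) * (z x - z' x) * κ x) →
        ∀ z ∈ Zad, J (SR z') + ξ / 2 * ∫ x, (z' x) ^ 2 ∂(muMeas Ω κ) ≤
          J (SR z) + ξ / 2 * ∫ x, (z x) ^ 2 ∂(muMeas Ω κ)) := by
  classical
  have hκm := hκ.meas
  have hκnn := hκ.nonneg
  have hs2 : (0:ℝ) ≤ (N:ℝ) + 2 * s := by
    have : (0:ℝ) ≤ (N:ℝ) := Nat.cast_nonneg N
    linarith
  have hsP : (0:ℝ) < (N:ℝ) + 2 * s := by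
    have : (0:ℝ) ≤ (N:ℝ) := Nat.cast_nonneg N
    linarith
  have hzbarL : MemLp zbar 2 (muMeas Ω κ) := hZsub zbar hzbar
  have hub := hSR zbar hzbarL
  have hpW := hpbar.1
  have hpL2 : MemLp pbar 2 (muMeas Ω κ) := memL2_mu_of_MemWg hκm hκnn hpW
  -- ================= Part (a) =================
  have hA : ∀ z ∈ Zad,
      0 ≤ ∫ x in Ωᶜ, (pbar x + ξ * zbar x) * (z x - zbar x) * κ x := by
    intro z hz
    have hzL : MemLp z 2 (muMeas Ω κ) := hZsub z hz
    have huz := hSR z hzL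
    rw [VIdecomp hκm hκnn ξ hpL2 hzL hzbarL]
    by_cases hμ0 : muMeas Ω κ = 0
    · simp [hμ0]
    have hwL2 : MemLp (DJ (SR zbar)) 2 (volume.restrict Ω) :=
      hDJmem _ (memL2_Omega_of_MemWg hub.1)
    have hF1 : ∫ x in Ω, DJ (SR zbar) x * (SR z x - SR zbar x) =
        ∫ x, (z x - zbar x) * pbar x ∂(muMeas Ω κ) :=
      fact1 hs2 hκm hκnn huz hub hpbar hwL2 hzL hzbarL
    have hdL2 : MemLp (fun x => SR z x - SR zbar x) 2 (volume.restrict Ω) :=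
      (memL2_Omega_of_MemWg huz.1).sub (memL2_Omega_of_MemWg hub.1)
    have hC2 : 0 ≤ ∫ x, (z x - zbar x) ^ 2 ∂(muMeas Ω κ) :=
      integral_nonneg fun x => sq_nonneg _
    have hsd : 0 ≤ Real.sqrt (∫ x in Ω, (SR z x - SR zbar x) ^ 2) := Real.sqrt_nonneg _
    set I1 := ∫ x, (z x - zbar x) * pbar x ∂(muMeas Ω κ) with hI1def
    set B := ∫ x, zbar x * (z x - zbar x) ∂(muMeas Ω κ) with hBdef
    set C2 := ∫ x, (z x - zbar x) ^ 2 ∂(muMeas Ω κ) with hC2def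
    set sd := Real.sqrt (∫ x in Ω, (SR z x - SR zbar x) ^ 2) with hsddef
    have key : ∀ ε : ℝ, 0 < ε → 0 ≤ (I1 + ξ * B) + ε * (sd + ξ / 2 * C2) := by
      intro ε hε
      obtain ⟨δ, hδ, hkey⟩ := Jdiff_seg J DJ hJdiff (memL2_Omega_of_MemWg hub.1) hdL2 hε
      set t := min δ (min 1 ε) with htdef
      have ht0 : 0 < t := lt_min hδ (lt_min one_pos hε)
      have htδ : t ≤ δ := min_le_left _ _
      have ht1 : t ≤ 1 := le_trans (min_le_right _ _) (min_le_left _ _)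
      have htε : t ≤ ε := le_trans (min_le_right _ _) (min_le_right _ _)
      set zt := t • z + (1 - t) • zbar with hztdef
      have hztZ : zt ∈ Zad := hZconv hz hzbar ht0.le (by linarith) (by ring)
      have hztL : MemLp zt 2 (muMeas Ω κ) :=
        (hzL.const_smul t).add (hzbarL.const_smul (1 - t))
      set w' := fun x => t * SR z x + (1 - t) * SR zbar x with hw'def
      have hw'W : MemWg N s Ω κ w' := MemWg_lincomb hs2 hκm t (1 - t) huz.1 hub.1
      have hw'sol : IsWeakSolRobin N s Ω κ (fun _ => 0) zt w' := by
        refine ⟨hw'W, fun v hv => ?_⟩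
        have hvmu : MemLp v 2 (muMeas Ω κ) := memL2_mu_of_MemWg hκm hκnn hv
        have huzmu : MemLp (SR z) 2 (muMeas Ω κ) := memL2_mu_of_MemWg hκm hκnn huz.1
        have hubmu : MemLp (SR zbar) 2 (muMeas Ω κ) := memL2_mu_of_MemWg hκm hκnn hub.1
        rw [kint_eq hκm hκnn w' v, kint_eq hκm hκnn zt v]
        have hgag : gagB N s (QSet Ω) w' v =
            t * gagB N s (QSet Ω) (SR z) v + (1 - t) * gagB N s (QSet Ω) (SR zbar) v :=
          gagB_lincomb (QSet Ω) t (1 - t) (SR z) (SR zbar) v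
            (gag_cross_int hs2 huz.1.1 hv.1 huz.1.2.2.2 hv.2.2.2)
            (gag_cross_int hs2 hub.1.1 hv.1 hub.1.2.2.2 hv.2.2.2)
        have hint : ∫ x, w' x * v x ∂(muMeas Ω κ) =
            t * (∫ x, SR z x * v x ∂(muMeas Ω κ)) +
              (1 - t) * ∫ x, SR zbar x * v x ∂(muMeas Ω κ) := by
          have i1 : Integrable (fun x => t * (SR z x * v x)) (muMeas Ω κ) :=
            (L2mul huzmu hvmu).const_mul t
          have i2 : Integrable (fun x => (1 - t) * (SR zbar x * v x)) (muMeas Ω κ) :=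
            (L2mul hubmu hvmu).const_mul (1 - t)
          rw [show (fun x => w' x * v x) =
              fun x => t * (SR z x * v x) + (1 - t) * (SR zbar x * v x) from
              funext fun x => by simp only [hw'def]; ring,
            integral_add i1 i2, integral_const_mul, integral_const_mul]
        have hintz : ∫ x, zt x * v x ∂(muMeas Ω κ) =
            t * (∫ x, z x * v x ∂(muMeas Ω κ)) +
              (1 - t) * ∫ x, zbar x * v x ∂(muMeas Ω κ) := by
          have i1 : Integrable (fun x => t * (z x * v x)) (muMeas Ω κ) :=
            (L2mul hzL hvmu).const_mul t
          have i2 : Integrable (fun x => (1 - t) * (zbar x * v x)) (muMeas Ω κ) :=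
            (L2mul hzbarL hvmu).const_mul (1 - t)
          rw [show (fun x => zt x * v x) =
              fun x => t * (z x * v x) + (1 - t) * (zbar x * v x) from
              funext fun x => by
                simp only [hztdef, Pi.add_apply, Pi.smul_apply, smul_eq_mul]; ring,
            integral_add i1 i2, integral_const_mul, integral_const_mul]
        have e1 := robin_eq_mu hκm hκnn huz hv
        have e2 := robin_eq_mu hκm hκnn hub hv
        simp only at e1 e2 ⊢
        rw [hgag, hint, hintz]
        linear_combination t * e1 + (1 - t) * e2
      have hw'eq : (fun x => SR zbar x + t * (SR z x - SR zbar x)) = w' :=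
        funext fun x => by simp only [hw'def]; ring
      have hequ : J (SR zt) = J (fun x => SR zbar x + t * (SR z x - SR zbar x)) := by
        rw [hw'eq]
        exact hJcongr _ _ (robin_unique hN hsP hκm hκnn hΩo hμ0 (hSR zt hztL) hw'sol)
      have hb := hkey t ht0 htδ
      have hb1 : J (fun x => SR zbar x + t * (SR z x - SR zbar x)) - J (SR zbar)
          - t * ∫ x in Ω, DJ (SR zbar) x * (SR z x - SR zbar x) ≤ ε * (t * sd) :=
        (abs_le.1 hb).2
      rw [hF1] at hb1
      have hminz := hmin zt hztZ
      rw [hequ] at hminz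
      have hexp := sq_expand hztL hzbarL
      have hcross : ∫ x, zbar x * (zt x - zbar x) ∂(muMeas Ω κ) = t * B := by
        rw [hBdef, ← integral_const_mul]
        exact integral_congr_ae (ae_of_all _ fun x => by
          simp only [hztdef, Pi.add_apply, Pi.smul_apply, smul_eq_mul]; ring)
      have hsq : ∫ x, (zt x - zbar x) ^ 2 ∂(muMeas Ω κ) = t ^ 2 * C2 := by
        rw [hC2def, ← integral_const_mul]
        exact integral_congr_ae (ae_of_all _ fun x => by
          simp only [hztdef, Pi.add_apply, Pi.smul_apply, smul_eq_mul]; ring)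
      rw [hcross, hsq] at hexp
      have hd1 : J (fun x => SR zbar x + t * (SR z x - SR zbar x)) - J (SR zbar) ≤
          t * I1 + ε * (t * sd) := by linarith
      have hd2 : ξ / 2 * (∫ x, zt x ^ 2 ∂(muMeas Ω κ)) =
          ξ / 2 * (∫ x, zbar x ^ 2 ∂(muMeas Ω κ)) + ξ * (t * B) + ξ / 2 * (t ^ 2 * C2) := by
        rw [hexp]; ring
      have h0 : 0 ≤ t * I1 + ε * (t * sd) + ξ * (t * B) + ξ / 2 * (t ^ 2 * C2) := by
        linarith
      have hc : ξ / 2 * (t ^ 2 * C2) ≤ ε * t * (ξ / 2 * C2) := by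
        nlinarith [mul_nonneg (mul_nonneg (sub_nonneg.2 htε) ht0.le)
          (mul_nonneg (by linarith : (0:ℝ) ≤ ξ / 2) hC2)]
      have hring : t * ((I1 + ξ * B) + ε * (sd + ξ / 2 * C2)) =
          (t * I1 + ε * (t * sd) + ξ * (t * B) + ξ / 2 * (t ^ 2 * C2)) +
            (ε * t * (ξ / 2 * C2) - ξ / 2 * (t ^ 2 * C2)) := by ring
      have hstep : 0 ≤ t * ((I1 + ξ * B) + ε * (sd + ξ / 2 * C2)) := by
        rw [hring]; linarith
      by_contra hneg
      push_neg at hneg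
      have : t * ((I1 + ξ * B) + ε * (sd + ξ / 2 * C2)) < 0 :=
        mul_neg_of_pos_of_neg ht0 hneg
      linarith
    exact nonneg_of_forall_eps
      (add_nonneg hsd (mul_nonneg (by linarith : (0:ℝ) ≤ ξ / 2) hC2)) key
  -- ================= Part (b) =================
  have hqL2 : MemLp (fun x => pbar x / ξ) 2 (muMeas Ω κ) := by
    rw [show (fun x => pbar x / ξ) = fun x => ξ⁻¹ * pbar x from
      funext fun x => by rw [div_eq_inv_mul]]
    exact hpL2.const_mul _
  have hYpos : ∀ z ∈ Zad,
      0 ≤ ∫ x, (zbar x + pbar x / ξ) * (z x - zbar x) ∂(muMeas Ω κ) := by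
    intro z hz
    have hzL : MemLp z 2 (muMeas Ω κ) := hZsub z hz
    have hxi : ξ * ∫ x, (zbar x + pbar x / ξ) * (z x - zbar x) ∂(muMeas Ω κ) =
        (∫ x, (z x - zbar x) * pbar x ∂(muMeas Ω κ)) +
          ξ * ∫ x, zbar x * (z x - zbar x) ∂(muMeas Ω κ) := by
      have i1 : Integrable (fun x => (z x - zbar x) * pbar x) (muMeas Ω κ) :=
        L2mul (hzL.sub hzbarL) hpL2
      have i2 : Integrable (fun x => ξ * (zbar x * (z x - zbar x))) (muMeas Ω κ) :=
        (L2mul hzbarL (hzL.sub hzbarL)).const_mul ξ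
      rw [← integral_const_mul,
        show (fun x => ξ * ((zbar x + pbar x / ξ) * (z x - zbar x))) =
          fun x => (z x - zbar x) * pbar x + ξ * (zbar x * (z x - zbar x)) from
          funext fun x => by field_simp; ring,
        integral_add i1 i2, integral_const_mul]
    have h1 := hA z hz
    rw [VIdecomp hκm hκnn ξ hpL2 hzL hzbarL, ← hxi] at h1
    exact nonneg_of_mul_nonneg_right h1 hξ
  have hBexp : ∀ z ∈ Zad,
      ∫ x, (z x + pbar x / ξ) ^ 2 ∂(muMeas Ω κ) =
        (∫ x, (zbar x + pbar x / ξ) ^ 2 ∂(muMeas Ω κ)) +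
          (2 * ∫ x, (zbar x + pbar x / ξ) * (z x - zbar x) ∂(muMeas Ω κ)) +
          ∫ x, (z x - zbar x) ^ 2 ∂(muMeas Ω κ) := by
    intro z hz
    have hzL : MemLp z 2 (muMeas Ω κ) := hZsub z hz
    have hzq : MemLp (fun x => z x + pbar x / ξ) 2 (muMeas Ω κ) := hzL.add hqL2
    have hzbq : MemLp (fun x => zbar x + pbar x / ξ) 2 (muMeas Ω κ) := hzbarL.add hqL2
    have hexp := sq_expand hzq hzbq
    have e1 : ∫ x, (zbar x + pbar x / ξ) * (z x + pbar x / ξ - (zbar x + pbar x / ξ))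
        ∂(muMeas Ω κ) = ∫ x, (zbar x + pbar x / ξ) * (z x - zbar x) ∂(muMeas Ω κ) :=
      integral_congr_ae (ae_of_all _ fun x => by ring)
    have e2 : ∫ x, (z x + pbar x / ξ - (zbar x + pbar x / ξ)) ^ 2 ∂(muMeas Ω κ) =
        ∫ x, (z x - zbar x) ^ 2 ∂(muMeas Ω κ) :=
      integral_congr_ae (ae_of_all _ fun x => by ring)
    rw [e1, e2] at hexp
    exact hexp
  have hBfst : ∀ z ∈ Zad,
      Real.sqrt (∫ x, (zbar x + pbar x / ξ) ^ 2 ∂(muMeas Ω κ)) ≤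
        Real.sqrt (∫ x, (z x + pbar x / ξ) ^ 2 ∂(muMeas Ω κ)) := by
    intro z hz
    apply Real.sqrt_le_sqrt
    have h1 := hYpos z hz
    have h2 : 0 ≤ ∫ x, (z x - zbar x) ^ 2 ∂(muMeas Ω κ) :=
      integral_nonneg fun x => sq_nonneg _
    rw [hBexp z hz]
    linarith
  have hBsnd : ∀ z ∈ Zad,
      Real.sqrt (∫ x, (z x + pbar x / ξ) ^ 2 ∂(muMeas Ω κ)) ≤
          Real.sqrt (∫ x, (zbar x + pbar x / ξ) ^ 2 ∂(muMeas Ω κ)) →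
        z =ᵐ[muMeas Ω κ] zbar := by
    intro z hz hle
    have hzL : MemLp z 2 (muMeas Ω κ) := hZsub z hz
    have ha : 0 ≤ ∫ x, (z x + pbar x / ξ) ^ 2 ∂(muMeas Ω κ) :=
      integral_nonneg fun x => sq_nonneg _
    have hble : ∫ x, (z x + pbar x / ξ) ^ 2 ∂(muMeas Ω κ) ≤
        ∫ x, (zbar x + pbar x / ξ) ^ 2 ∂(muMeas Ω κ) := by
      have := pow_le_pow_left₀ (Real.sqrt_nonneg _) hle 2
      rwa [Real.sq_sqrt ha, Real.sq_sqrt (integral_nonneg fun x => sq_nonneg _)] at this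
    have h1 := hYpos z hz
    have hC2 : ∫ x, (z x - zbar x) ^ 2 ∂(muMeas Ω κ) = 0 := by
      have h2 : 0 ≤ ∫ x, (z x - zbar x) ^ 2 ∂(muMeas Ω κ) :=
        integral_nonneg fun x => sq_nonneg _
      have := hBexp z hz
      linarith
    have hint : Integrable (fun x => (z x - zbar x) ^ 2) (muMeas Ω κ) :=
      (hzL.sub hzbarL).integrable_sq
    have := (integral_eq_zero_iff_of_nonneg_ae
      (ae_of_all _ fun x => sq_nonneg (z x - zbar x)) hint).1 hC2
    filter_upwards [this] with x hx
    have : (z x - zbar x) ^ 2 = 0 := hx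
    have h2 : z x - zbar x = 0 := by
      have := sq_eq_zero_iff.1 this
      exact this
    exact sub_eq_zero.1 h2
  -- ================= Part (c) =================
  have hC : (∀ (u v : RN N → ℝ) (t : ℝ), MemLp u 2 (volume.restrict Ω) →
        MemLp v 2 (volume.restrict Ω) → 0 ≤ t → t ≤ 1 →
        J (t • u + (1 - t) • v) ≤ t * J u + (1 - t) * J v) →
      ∀ z' ∈ Zad, ∀ p' : RN N → ℝ,
        IsWeakSolRobin N s Ω κ
          (fun v => ∫ x in Ω, DJ (SR z') x * v x) (fun _ => 0) p' →
        (∀ z ∈ Zad,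
          0 ≤ ∫ x in Ωᶜ, (p' x + ξ * z' x) * (z x - z' x) * κ x) →
        ∀ z ∈ Zad, J (SR z') + ξ / 2 * ∫ x, (z' x) ^ 2 ∂(muMeas Ω κ) ≤
          J (SR z) + ξ / 2 * ∫ x, (z x) ^ 2 ∂(muMeas Ω κ) := by
    intro hconv z' hz' p' hp' hVI z hz
    have hz'L : MemLp z' 2 (muMeas Ω κ) := hZsub z' hz'
    have hzL : MemLp z 2 (muMeas Ω κ) := hZsub z hz
    have hu' := hSR z' hz'L
    have huz := hSR z hzL
    have hp'L2 : MemLp p' 2 (muMeas Ω κ) := memL2_mu_of_MemWg hκm hκnn hp'.1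
    have hwL2 : MemLp (DJ (SR z')) 2 (volume.restrict Ω) :=
      hDJmem _ (memL2_Omega_of_MemWg hu'.1)
    have hgrad := grad_ineq J DJ hJdiff hconv
      (memL2_Omega_of_MemWg hu'.1) (memL2_Omega_of_MemWg huz.1)
    have hF1 : ∫ x in Ω, DJ (SR z') x * (SR z x - SR z' x) =
        ∫ x, (z x - z' x) * p' x ∂(muMeas Ω κ) :=
      fact1 hs2 hκm hκnn huz hu' hp' hwL2 hzL hz'L
    have hVIz := hVI z hz
    rw [VIdecomp hκm hκnn ξ hp'L2 hzL hz'L] at hVIz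
    have hexp := sq_expand hzL hz'L
    have hsqnn : 0 ≤ ∫ x, (z x - z' x) ^ 2 ∂(muMeas Ω κ) :=
      integral_nonneg fun x => sq_nonneg _
    have hxihalf : 0 ≤ ξ / 2 * ∫ x, (z x - z' x) ^ 2 ∂(muMeas Ω κ) :=
      mul_nonneg (by linarith) hsqnn
    rw [hF1] at hgrad
    nlinarith [hgrad, hVIz, hexp, hxihalf, hξ]
  exact ⟨hA, ⟨fun _ => ⟨hBfst, hBsnd⟩, fun _ => hA⟩, hC⟩
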